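/- Let B be a polynomial factor of F_p^n of degree d and complexity C, let f : F_p^n → {0,1} be decomposed as f = E[f|B] + f_2 + f_3 with f_2, f_3 : F_p^n → [-1,1], and let B' be a polynomial factor of degree d and complexity C' whose partition refines that of B. Then ‖E[f|B] − E[f|B']‖_1 ≤ ‖f_2‖_2 + p^{dC'}‖f_3‖_{U^{d+1}}. -/

import Mathlib

open Finset

/-- Non-classical polynomial of degree ≤ d: all `(d+1)`-fold additive derivatives vanish. -/
def IsPolyDegLE {V : Type*} [AddCommGroup V] (P : V → AddCircle (1 : ℝ)) (d : ℕ) : Prop :=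
  ∀ (y : Fin (d + 1) → V) (x : V),
    ∑ I : Finset (Fin (d + 1)),
      ((-1 : ℤ) ^ (d + 1 - I.card)) • P (x + ∑ i ∈ I, y i) = 0

/-- Gowers average of order `d` of a real-valued function. -/
noncomputable def gowersAvg {V : Type*} [AddCommGroup V] [Fintype V]
    (f : V → ℝ) (d : ℕ) : ℝ :=
  (∑ x : V, ∑ y : Fin d → V, ∏ I : Finset (Fin d), f (x + ∑ i ∈ I, y i)) /
    ((Fintype.card V : ℝ) ^ (d + 1))

/-- Gowers norm of order `d` of a real-valued function. -/
noncomputable def gowersNorm {V : Type*} [AddCommGroup V] [Fintype V]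
    (f : V → ℝ) (d : ℕ) : ℝ :=
  |gowersAvg f d| ^ ((1 : ℝ) / 2 ^ d)

open scoped Classical in
/-- Conditional expectation over the fibers of `B`. -/
noncomputable def condExp {X α : Type*} [Fintype X] (B : X → α) (f : X → ℝ) (x : X) : ℝ :=
  (∑ y ∈ Finset.univ.filter (fun y => B y = B x), f y) /
    ((Finset.univ.filter (fun y => B y = B x)).card : ℝ)

/-- `L¹` average. -/
noncomputable def l1Avg {X : Type*} [Fintype X] (f : X → ℝ) : ℝ :=
  (∑ x : X, |f x|) / (Fintype.card X : ℝ)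

/-- `L²` average norm. -/
noncomputable def l2Avg {X : Type*} [Fintype X] (f : X → ℝ) : ℝ :=
  Real.sqrt ((∑ x : X, (f x) ^ 2) / (Fintype.card X : ℝ))


section Reindex

variable {M : Type*}

/-- Split a product over subsets of `Fin (k+1)` according to membership of `0`. -/
@[to_additive sum_finset_fin_succ]
lemma prod_finset_fin_succ [CommMonoid M] (k : ℕ) (φ : Finset (Fin (k + 1)) → M) :
    ∏ I : Finset (Fin (k + 1)), φ I
      = ∏ J : Finset (Fin k),
          (φ (J.map (Fin.succEmb k)) * φ (insert 0 (J.map (Fin.succEmb k)))) := by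
  classical
  have hnotmem : ∀ J : Finset (Fin k), (0 : Fin (k+1)) ∉ J.map (Fin.succEmb k) := by
    intro J h
    rcases Finset.mem_map.1 h with ⟨j, _, hj⟩
    exact (Fin.succ_ne_zero j) hj
  set σ : Finset (Fin k) × Bool → Finset (Fin (k + 1)) :=
    fun Jb => if Jb.2 then insert 0 (Jb.1.map (Fin.succEmb k)) else Jb.1.map (Fin.succEmb k)
    with hσ
  have hinj : Function.Injective σ := by
    rintro ⟨J, b⟩ ⟨J', b'⟩ h
    simp only [hσ] at h
    have hmapinj : ∀ J J' : Finset (Fin k),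
        J.map (Fin.succEmb k) = J'.map (Fin.succEmb k) → J = J' :=
      fun J J' hJ => Finset.map_injective _ hJ
    cases b <;> cases b' <;>
      simp only [Bool.false_eq_true, if_false, if_true] at h
    · exact Prod.ext (hmapinj _ _ h) rfl
    · exact absurd (h.symm ▸ Finset.mem_insert_self 0 (J'.map (Fin.succEmb k))) (hnotmem J)
    · exact absurd (h ▸ Finset.mem_insert_self 0 (J.map (Fin.succEmb k))) (hnotmem J')
    · have h2 : J.map (Fin.succEmb k) = J'.map (Fin.succEmb k) := by
        have h3 := congrArg (fun s => Finset.erase s 0) h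
        simpa [Finset.erase_insert (hnotmem J), Finset.erase_insert (hnotmem J')] using h3
      exact Prod.ext (hmapinj _ _ h2) rfl
  have hbij : Function.Bijective σ := by
    rw [Fintype.bijective_iff_injective_and_card]
    refine ⟨hinj, ?_⟩
    simp [Fintype.card_finset, pow_succ, mul_comm]
  calc ∏ I : Finset (Fin (k + 1)), φ I = ∏ Jb : Finset (Fin k) × Bool, φ (σ Jb) :=
        (Fintype.prod_bijective σ hbij _ _ (fun _ => rfl)).symm
    _ = ∏ J : Finset (Fin k), (φ (σ (J, false)) * φ (σ (J, true))) := by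
        rw [Fintype.prod_prod_type]
        refine Finset.prod_congr rfl fun J _ => ?_
        rw [Fintype.prod_bool]
        exact mul_comm _ _
    _ = _ := by simp [hσ]

end Reindex

/-- The (additive) derivative of a polynomial of degree at most `d+1` has degree at most `d`. -/
lemma isPolyDegLE_deriv {V : Type*} [AddCommGroup V] {P : V → AddCircle (1 : ℝ)} {d : ℕ}
    (h : IsPolyDegLE P (d + 1)) (t : V) :
    IsPolyDegLE (fun x => P (x + t) - P x) d := by
  intro y x
  have H := h (Fin.cons t y) x
  rw [sum_finset_fin_succ] at H
  rw [← H]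
  refine Finset.sum_congr rfl fun J _ => ?_
  have hJcard : J.card ≤ d + 1 := by
    simpa using Finset.card_le_univ J
  have h0 : (0 : Fin (d + 2)) ∉ J.map (Fin.succEmb (d + 1)) := by
    intro hmem
    rcases Finset.mem_map.1 hmem with ⟨j, _, hj⟩
    exact (Fin.succ_ne_zero j) hj
  have hsum : ∑ i ∈ J.map (Fin.succEmb (d + 1)), (Fin.cons t y : Fin (d + 2) → V) i
      = ∑ j ∈ J, y j := by
    rw [Finset.sum_map]
    exact Finset.sum_congr rfl fun j _ => by simp
  have hsum2 : ∑ i ∈ insert 0 (J.map (Fin.succEmb (d + 1))), (Fin.cons t y : Fin (d + 2) → V) i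
      = t + ∑ j ∈ J, y j := by
    rw [Finset.sum_insert h0, hsum, Fin.cons_zero]
  have hcard1 : (J.map (Fin.succEmb (d + 1))).card = J.card := Finset.card_map _
  have hcard2 : (insert 0 (J.map (Fin.succEmb (d + 1)))).card = J.card + 1 := by
    rw [Finset.card_insert_of_notMem h0, hcard1]
  rw [hsum, hsum2, hcard1, hcard2]
  have hexp : d + 1 + 1 - J.card = (d + 1 - J.card) + 1 := by omega
  have hexp2 : d + 1 + 1 - (J.card + 1) = d + 1 - J.card := by omega
  rw [hexp, hexp2, pow_succ]
  have hpt : x + (t + ∑ j ∈ J, y j) = (x + ∑ j ∈ J, y j) + t := by abel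
  rw [hpt]
  module

/-- `ℕ`-linear combinations of polynomials of degree at most `d` have degree at most `d`. -/
lemma isPolyDegLE_combo {V : Type*} [AddCommGroup V] {d C' : ℕ}
    (Q : Fin C' → V → AddCircle (1 : ℝ)) (hQ : ∀ i, IsPolyDegLE (Q i) d) (m : Fin C' → ℕ) :
    IsPolyDegLE (fun x => ∑ i, m i • Q i x) d := by
  intro y x
  have key : ∀ I : Finset (Fin (d + 1)),
      ((-1 : ℤ) ^ (d + 1 - I.card)) • ∑ i, m i • Q i (x + ∑ j ∈ I, y j)
      = ∑ i, m i • (((-1 : ℤ) ^ (d + 1 - I.card)) • Q i (x + ∑ j ∈ I, y j)) := by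
    intro I
    rw [Finset.smul_sum]
    refine Finset.sum_congr rfl fun i _ => ?_
    rw [← natCast_zsmul (Q i (x + ∑ j ∈ I, y j)) (m i), smul_smul,
      mul_comm ((-1 : ℤ) ^ (d + 1 - I.card)) ((m i : ℤ)), ← smul_smul,
      natCast_zsmul (((-1 : ℤ) ^ (d + 1 - I.card)) • Q i (x + ∑ j ∈ I, y j)) (m i)]
  simp_rw [key]
  rw [Finset.sum_comm]
  have : ∀ i : Fin C',
      ∑ I : Finset (Fin (d + 1)), m i • (((-1 : ℤ) ^ (d + 1 - I.card)) • Q i (x + ∑ j ∈ I, y j))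
        = m i • (0 : AddCircle (1 : ℝ)) := by
    intro i
    rw [← Finset.smul_sum, hQ i y x]
  simp [this]

/-- A polynomial of degree at most `d` on a `p`-torsion group has `p^d`-torsion differences. -/
lemma torsion_of_poly {V : Type*} [AddCommGroup V] {p : ℕ} (hV : ∀ v : V, p • v = 0) :
    ∀ {d : ℕ} (P : V → AddCircle (1 : ℝ)), IsPolyDegLE P d →
      ∀ x : V, (p ^ d) • (P x - P 0) = 0 := by
  intro d
  induction d with
  | zero =>
    intro P h x
    have hconst : ∀ z w : V, P (z + w) = P z := by
      intro z w
      have H := h (fun _ => w) z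
      rw [sum_finset_fin_succ] at H
      have hJ : ∀ J : Finset (Fin 0), J = ∅ :=
        fun J => Finset.eq_empty_of_forall_notMem (fun i _ => i.elim0)
      rw [Fintype.sum_eq_single ∅ (fun b hb => absurd (hJ b) hb)] at H
      rw [Finset.map_empty] at H
      have he : (insert (0 : Fin 1) (∅ : Finset (Fin 1))) = {0} := rfl
      rw [he] at H
      simp only [Finset.card_empty, Finset.sum_empty, Finset.card_singleton,
        Finset.sum_singleton, add_zero, pow_one, pow_zero, neg_smul, one_smul,
        Nat.sub_zero, Nat.sub_self, zero_add] at H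
      have := neg_add_eq_zero.mp H
      simpa using this.symm
    have : P x = P 0 := by
      have := hconst 0 x
      simpa using this
    simp [this]
  | succ d ih =>
    intro P h x
    have hc : ∀ t z : V, (p ^ d) • (P (z + t) - P z) = (p ^ d) • (P t - P 0) := by
      intro t z
      have h1 := ih _ (isPolyDegLE_deriv h t) z
      rw [smul_sub, sub_eq_zero] at h1
      rw [h1]
      simp
    set c : V → AddCircle (1 : ℝ) := fun t => (p ^ d) • (P t - P 0) with hcdef
    have hadd : ∀ t u, c (t + u) = c t + c u := by
      intro t u
      have h1 : c (t + u) = (p ^ d) • ((P (u + t) - P u) + (P u - P 0)) := by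
        rw [hcdef]
        simp only []
        rw [add_comm t u]
        congr 1
        abel
      rw [h1, smul_add, hc t u, add_comm]
    have hzero : c 0 = 0 := by simp [hcdef]
    have hnat : ∀ (m : ℕ) (t : V), c (m • t) = m • c t := by
      intro m
      induction m with
      | zero => intro t; simpa using hzero
      | succ k ihk =>
        intro t
        rw [succ_nsmul, succ_nsmul, hadd, ihk]
    have hpx : p • c x = 0 := by
      rw [← hnat p x, hV x, hzero]
    rw [pow_succ', mul_smul]
    exact hpx
section Character

open ComplexConjugate

noncomputable def eC (t : AddCircle (1 : ℝ)) : ℂ := (AddCircle.toCircle t : ℂ)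

lemma eC_add (s t : AddCircle (1 : ℝ)) : eC (s + t) = eC s * eC t := by
  simp [eC, AddCircle.toCircle_add]

lemma eC_zero : eC (0 : AddCircle (1 : ℝ)) = 1 := by simp [eC]

lemma eC_ne_zero (t : AddCircle (1 : ℝ)) : eC t ≠ 0 := Circle.coe_ne_zero _

lemma eC_abs (t : AddCircle (1 : ℝ)) : ‖eC t‖ = 1 := Circle.norm_coe _

lemma eC_inj : Function.Injective eC := fun a b h =>
  AddCircle.injective_toCircle one_ne_zero (Circle.coe_injective h)

lemma eC_nsmul (m : ℕ) (t : AddCircle (1 : ℝ)) : eC (m • t) = eC t ^ m := by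
  induction m with
  | zero => simp [eC_zero]
  | succ k ih => rw [succ_nsmul, eC_add, ih, pow_succ]

lemma eC_conj (t : AddCircle (1 : ℝ)) : conj (eC t) = eC (-t) := by
  have h1 : eC t * eC (-t) = 1 := by rw [← eC_add, add_neg_cancel, eC_zero]
  have h2 : eC t * conj (eC t) = 1 := by
    rw [Complex.mul_conj]
    norm_cast
    rw [Complex.normSq_eq_norm_sq, eC_abs]
    norm_num
  exact mul_left_cancel₀ (eC_ne_zero t) (h2.trans h1.symm)

lemma eC_geom_sum {M : ℕ} (hM : 0 < M) {s : AddCircle (1 : ℝ)} (hs : M • s = 0) :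
    ∑ k ∈ Finset.range M, eC s ^ k = if s = 0 then (M : ℂ) else 0 := by
  by_cases h : s = 0
  · subst h; simp [eC_zero]
  · have hz : eC s ^ M = 1 := by rw [← eC_nsmul, hs, eC_zero]
    have hne : eC s ≠ 1 := by
      intro hh
      exact h (eC_inj (by rw [hh, ← eC_zero]) )
    rw [if_neg h, geom_sum_eq hne, hz]
    simp

/-- conjugation iterated `m` times. -/
noncomputable def cnj (m : ℕ) (z : ℂ) : ℂ := if Even m then z else conj z

lemma cnj_succ (m : ℕ) (z : ℂ) : cnj (m + 1) z = conj (cnj m z) := by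
  rcases Nat.even_or_odd m with h | h
  · rw [cnj, cnj, if_pos h, if_neg (by simp [Nat.even_add_one, h])]
  · rw [cnj, cnj, if_neg (Nat.not_even_iff_odd.2 h),
      if_pos (by simp [Nat.even_add_one, Nat.not_even_iff_odd.2 h]), Complex.conj_conj]

lemma cnj_succ' (m : ℕ) (z : ℂ) : cnj (m + 1) z = cnj m (conj z) := by
  rw [cnj_succ]
  rcases Nat.even_or_odd m with h | h
  · rw [cnj, cnj, if_pos h, if_pos h]
  · rw [cnj, cnj, if_neg (Nat.not_even_iff_odd.2 h), if_neg (Nat.not_even_iff_odd.2 h)]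

lemma cnj_mul (m : ℕ) (a b : ℂ) : cnj m (a * b) = cnj m a * cnj m b := by
  rw [cnj, cnj, cnj]
  split <;> simp

lemma cnj_conj (m : ℕ) (z : ℂ) : cnj m (conj z) = conj (cnj m z) := (cnj_succ' m z).symm.trans (cnj_succ m z)

lemma cnj_ofReal (m : ℕ) (r : ℝ) : cnj m ((r : ℝ) : ℂ) = (r : ℂ) := by
  rw [cnj]; split <;> simp [Complex.conj_ofReal]

lemma cnj_eC (m : ℕ) (t : AddCircle (1 : ℝ)) : cnj m (eC t) = eC (((-1 : ℤ) ^ m) • t) := by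
  rcases Nat.even_or_odd m with h | h
  · rw [cnj, if_pos h, h.neg_one_pow, one_zsmul]
  · rw [cnj, if_neg (Nat.not_even_iff_odd.2 h), h.neg_one_pow, eC_conj]
    congr 1
    rw [neg_one_zsmul]

end Character
section Gowers

open ComplexConjugate

variable {V : Type*} [AddCommGroup V] [Fintype V]

/-- helper facts about subsets of `Fin (k+1)` -/
lemma aux_not_mem {k : ℕ} (J : Finset (Fin k)) : (0 : Fin (k + 1)) ∉ J.map (Fin.succEmb k) := by
  intro hmem
  rcases Finset.mem_map.1 hmem with ⟨j, _, hj⟩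
  exact (Fin.succ_ne_zero j) hj

lemma aux_card {k : ℕ} (J : Finset (Fin k)) : (J.map (Fin.succEmb k)).card = J.card :=
  Finset.card_map _

lemma aux_card_insert {k : ℕ} (J : Finset (Fin k)) :
    (insert 0 (J.map (Fin.succEmb k))).card = J.card + 1 := by
  rw [Finset.card_insert_of_notMem (aux_not_mem J), aux_card]

lemma aux_sum_cons {k : ℕ} (t : V) (y : Fin k → V) (J : Finset (Fin k)) :
    ∑ i ∈ J.map (Fin.succEmb k), (Fin.cons t y : Fin (k + 1) → V) i = ∑ j ∈ J, y j := by
  rw [Finset.sum_map]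
  exact Finset.sum_congr rfl fun j _ => by simp

lemma aux_sum_cons_insert {k : ℕ} (t : V) (y : Fin k → V) (J : Finset (Fin k)) :
    ∑ i ∈ insert 0 (J.map (Fin.succEmb k)), (Fin.cons t y : Fin (k + 1) → V) i
      = t + ∑ j ∈ J, y j := by
  rw [Finset.sum_insert (aux_not_mem J), aux_sum_cons, Fin.cons_zero]

/-- Unnormalised complex Gowers sum. -/
noncomputable def gNum (g : V → ℂ) (k : ℕ) : ℂ :=
  ∑ x : V, ∑ y : Fin k → V, ∏ I : Finset (Fin k), cnj I.card (g (x + ∑ i ∈ I, y i))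

/-- the "box" function appearing in the Gowers sum -/
noncomputable def gBox (g : V → ℂ) {k : ℕ} (y : Fin k → V) (x : V) : ℂ :=
  ∏ J : Finset (Fin k), cnj J.card (g (x + ∑ i ∈ J, y i))

lemma gNum_cons (g : V → ℂ) (k : ℕ) :
    gNum g (k + 1) = ∑ x : V, ∑ t : V, ∑ y : Fin k → V,
      gBox g y x * conj (gBox g y (x + t)) := by
  unfold gNum
  refine Finset.sum_congr rfl fun x _ => ?_
  calc ∑ y' : Fin (k + 1) → V, ∏ I : Finset (Fin (k + 1)), cnj I.card (g (x + ∑ i ∈ I, y' i))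
      = ∑ ty : V × (Fin k → V), ∏ I : Finset (Fin (k + 1)),
          cnj I.card (g (x + ∑ i ∈ I, Fin.cons ty.1 ty.2 i)) :=
        (Fintype.sum_equiv (Fin.consEquiv fun _ : Fin (k + 1) => V) _ _ (fun ty => rfl)).symm
    _ = ∑ t : V, ∑ y : Fin k → V, ∏ I : Finset (Fin (k + 1)),
          cnj I.card (g (x + ∑ i ∈ I, Fin.cons t y i)) := Fintype.sum_prod_type _
    _ = _ := ?_
  refine Finset.sum_congr rfl fun t _ => Finset.sum_congr rfl fun y _ => ?_
  rw [prod_finset_fin_succ]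
  rw [Finset.prod_mul_distrib]
  congr 1
  · refine Finset.prod_congr rfl fun J _ => ?_
    rw [aux_card, aux_sum_cons]
  · rw [gBox, map_prod]
    refine Finset.prod_congr rfl fun J _ => ?_
    rw [aux_card_insert, aux_sum_cons_insert, cnj_succ]
    congr 2
    abel

lemma gNum_succ (g : V → ℂ) (k : ℕ) :
    gNum g (k + 1) = ∑ t : V, gNum (fun x => g x * conj (g (x + t))) k := by
  rw [gNum_cons, Finset.sum_comm]
  refine Finset.sum_congr rfl fun t _ => ?_
  unfold gNum
  refine Finset.sum_congr rfl fun x _ => Finset.sum_congr rfl fun y _ => ?_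
  have key : ∀ J : Finset (Fin k),
      cnj J.card ((fun x => g x * conj (g (x + t))) (x + ∑ i ∈ J, y i))
      = cnj J.card (g (x + ∑ i ∈ J, y i)) * conj (cnj J.card (g ((x + t) + ∑ i ∈ J, y i))) := by
    intro J
    show cnj J.card (g (x + ∑ i ∈ J, y i) * conj (g ((x + ∑ i ∈ J, y i) + t))) = _
    rw [cnj_mul, cnj_conj]
    congr 3
    abel
  rw [Finset.prod_congr rfl fun J _ => key J, Finset.prod_mul_distrib, ← map_prod]
  rfl

lemma gNum_normSq (g : V → ℂ) (k : ℕ) :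
    gNum g (k + 1) = ∑ y : Fin k → V,
      ((Complex.normSq (∑ x : V, gBox g y x) : ℝ) : ℂ) := by
  calc gNum g (k + 1)
      = ∑ x : V, ∑ t : V, ∑ y : Fin k → V, gBox g y x * conj (gBox g y (x + t)) :=
        gNum_cons g k
    _ = ∑ x : V, ∑ y : Fin k → V, ∑ t : V, gBox g y x * conj (gBox g y (x + t)) :=
        Finset.sum_congr rfl fun x _ => Finset.sum_comm
    _ = ∑ y : Fin k → V, ∑ x : V, ∑ t : V, gBox g y x * conj (gBox g y (x + t)) :=
        Finset.sum_comm
    _ = _ := ?_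
  refine Finset.sum_congr rfl fun y _ => ?_
  have h1 : ∀ x : V, ∑ t : V, gBox g y x * conj (gBox g y (x + t))
      = gBox g y x * conj (∑ x' : V, gBox g y x') := by
    intro x
    rw [← Finset.mul_sum, ← map_sum]
    congr 2
    exact Fintype.sum_equiv (Equiv.addLeft x) _ _ (fun t => rfl)
  calc ∑ x : V, ∑ t : V, gBox g y x * conj (gBox g y (x + t))
      = ∑ x : V, gBox g y x * conj (∑ x' : V, gBox g y x') :=
        Finset.sum_congr rfl fun x _ => h1 x
    _ = (∑ x : V, gBox g y x) * conj (∑ x' : V, gBox g y x') := by rw [Finset.sum_mul]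
    _ = _ := by rw [Complex.mul_conj]

lemma gNum_one (g : V → ℂ) :
    gNum g 1 = ((Complex.normSq (∑ x : V, g x) : ℝ) : ℂ) := by
  rw [gNum_normSq]
  have huniq : ∀ y : Fin 0 → V, ∀ x : V, gBox g y x = g x := by
    intro y x
    unfold gBox
    rw [Fintype.prod_eq_single ∅ (fun b hb =>
      absurd (Finset.eq_empty_of_forall_notMem (fun i _ => i.elim0)) hb)]
    · simp [cnj]
  have h2 : ∀ y : Fin 0 → V, ((Complex.normSq (∑ x : V, gBox g y x) : ℝ) : ℂ)
      = ((Complex.normSq (∑ x : V, g x) : ℝ) : ℂ) :=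
    fun y => congrArg (fun r : ℝ => (r : ℂ))
      (congrArg Complex.normSq (Finset.sum_congr rfl fun x _ => huniq y x))
  rw [Finset.sum_congr rfl (fun y _ => h2 y), Finset.sum_const]
  have hcard : (Finset.univ : Finset (Fin 0 → V)).card = 1 := by simp
  rw [hcard, one_smul]
section GowersCS

open ComplexConjugate

lemma avg_pow_le {ι : Type*} [Fintype ι] [Nonempty ι] (f : ι → ℝ) (hf : ∀ i, 0 ≤ f i)
    (m : ℕ) (hm : 1 ≤ m) :
    ((∑ i, f i) / (Fintype.card ι : ℝ)) ^ m ≤ (∑ i, f i ^ m) / (Fintype.card ι : ℝ) := by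
  have hN : (0 : ℝ) < Fintype.card ι := by exact_mod_cast Fintype.card_pos
  have h := pow_sum_div_card_le_sum_pow (s := Finset.univ) (f := f)
    (fun i _ => hf i) (m - 1)
  rw [Finset.card_univ, Nat.sub_add_cancel hm] at h
  calc ((∑ i, f i) / (Fintype.card ι : ℝ)) ^ m
      = ((∑ i, f i) ^ m / (Fintype.card ι : ℝ) ^ (m - 1)) / (Fintype.card ι : ℝ) := by
        rw [div_pow, div_div, ← pow_succ, Nat.sub_add_cancel hm]
    _ ≤ (∑ i, f i ^ m) / (Fintype.card ι : ℝ) := by gcongr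

variable {V : Type*} [AddCommGroup V] [Fintype V]

/-- Normalised complex Gowers average. -/
noncomputable def gAvgC (g : V → ℂ) (k : ℕ) : ℂ :=
  gNum g k / (Fintype.card V : ℂ) ^ (k + 1)

lemma cardV_pos : 0 < (Fintype.card V : ℝ) := by
  have : Nonempty V := ⟨0⟩
  exact_mod_cast Fintype.card_pos

lemma gAvgC_succ (g : V → ℂ) (k : ℕ) :
    gAvgC g (k + 1)
      = (∑ t : V, gAvgC (fun x => g x * conj (g (x + t))) k) / (Fintype.card V : ℂ) := by
  unfold gAvgC
  rw [gNum_succ, Finset.sum_div, Finset.sum_div]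
  refine Finset.sum_congr rfl fun t _ => ?_
  rw [div_div, ← pow_succ]

lemma gAvgC_one (g : V → ℂ) :
    gAvgC g 1 = (((‖∑ x : V, g x‖ / (Fintype.card V : ℝ)) ^ 2 : ℝ) : ℂ) := by
  unfold gAvgC
  rw [gNum_one]
  have hN : ((Fintype.card V : ℂ)) ^ (1 + 1) = (((Fintype.card V : ℝ) ^ 2 : ℝ) : ℂ) := by
    push_cast; ring
  rw [hN, ← Complex.ofReal_div]
  congr 1
  rw [div_pow, ← Complex.sq_norm]

/-- Iterated Cauchy–Schwarz: the `2^k`-th power of the average is bounded by the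
Gowers average. -/
lemma abs_avg_pow_le_gAvgC : ∀ k : ℕ, 1 ≤ k → ∀ g : V → ℂ,
    (‖∑ x : V, g x‖ / (Fintype.card V : ℝ)) ^ (2 ^ k) ≤ (gAvgC g k).re := by
  intro k
  induction k with
  | zero => omega
  | succ k ih =>
    intro _ g
    have hnV : Nonempty V := ⟨0⟩
    by_cases hk0 : k = 0
    · subst hk0
      rw [gAvgC_one, Complex.ofReal_re]
      norm_num
    · have hk : 1 ≤ k := Nat.one_le_iff_ne_zero.2 hk0
      set N : ℝ := (Fintype.card V : ℝ) with hNdef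
      have hN : 0 < N := cardV_pos
      set S : ℂ := ∑ x : V, g x with hS
      set T : V → ℂ := fun t => ∑ x : V, g x * conj (g (x + t)) with hT
      have hsq : ((Complex.normSq S : ℝ) : ℂ) = ∑ t : V, T t := by
        rw [← Complex.mul_conj]
        calc S * conj S = ∑ x : V, (g x * conj (∑ x' : V, g x')) := by rw [← Finset.sum_mul]
          _ = ∑ x : V, (g x * conj (∑ t : V, g (x + t))) := by
              refine Finset.sum_congr rfl fun x _ => ?_
              congr 2
              exact (Fintype.sum_equiv (Equiv.addLeft x) _ _ (fun t => rfl)).symm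
          _ = ∑ x : V, ∑ t : V, g x * conj (g (x + t)) := by
              refine Finset.sum_congr rfl fun x _ => ?_
              rw [map_sum, Finset.mul_sum]
          _ = ∑ t : V, T t := Finset.sum_comm
      have habs2 : (‖S‖ / N) ^ 2 = ‖∑ t : V, T t‖ / N ^ 2 := by
        rw [div_pow, Complex.sq_norm, ← hsq, Complex.norm_real, Real.norm_eq_abs,
          abs_of_nonneg (Complex.normSq_nonneg S)]
      calc (‖S‖ / N) ^ 2 ^ (k + 1) = ((‖S‖ / N) ^ 2) ^ 2 ^ k := by
            rw [← pow_mul, ← pow_succ']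
        _ = (‖∑ t : V, T t‖ / N ^ 2) ^ 2 ^ k := by rw [habs2]
        _ ≤ ((∑ t : V, ‖T t‖) / N ^ 2) ^ 2 ^ k := by
            gcongr
            exact norm_sum_le _ _
        _ = ((∑ t : V, ‖T t‖ / N) / N) ^ 2 ^ k := by
            rw [pow_two, ← div_div, Finset.sum_div]
        _ ≤ (∑ t : V, (‖T t‖ / N) ^ 2 ^ k) / N :=
            avg_pow_le _ (fun t => by positivity) _ (Nat.one_le_two_pow)
        _ ≤ (∑ t : V, (gAvgC (fun x => g x * conj (g (x + t))) k).re) / N := by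
            gcongr with t ht
            exact ih hk (fun x => g x * conj (g (x + t)))
        _ = (gAvgC g (k + 1)).re := by
            rw [gAvgC_succ]
            rw [show ((Fintype.card V : ℂ)) = ((N : ℝ) : ℂ) by rw [hNdef]; push_cast; rfl]
            rw [Complex.div_ofReal_re, Complex.re_sum]

end GowersCS
section KeyGowers

open ComplexConjugate

variable {V : Type*} [AddCommGroup V] [Fintype V]

lemma eC_finset_sum {ι : Type*} (s : Finset ι) (h : ι → AddCircle (1 : ℝ)) :
    eC (∑ i ∈ s, h i) = ∏ i ∈ s, eC (h i) := by
  classical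
  induction s using Finset.cons_induction with
  | empty => simp [eC_zero]
  | cons a s ha ih => rw [Finset.sum_cons, Finset.prod_cons, eC_add, ih]

lemma gAvgC_ofReal (f : V → ℝ) (k : ℕ) :
    gAvgC (fun x => (f x : ℂ)) k = ((gowersAvg f k : ℝ) : ℂ) := by
  unfold gAvgC gNum gowersAvg
  push_cast
  refine congrArg₂ _ ?_ rfl
  refine Finset.sum_congr rfl fun x _ => Finset.sum_congr rfl fun y _ => ?_
  refine Finset.prod_congr rfl fun I _ => ?_
  rw [cnj_ofReal]

lemma sign_swap {d : ℕ} (I : Finset (Fin (d + 1))) :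
    ((-1 : ℤ) ^ I.card) = (-1 : ℤ) ^ (d + 1) * ((-1 : ℤ) ^ (d + 1 - I.card)) := by
  have hcard : I.card ≤ d + 1 := by simpa using Finset.card_le_univ I
  rw [← pow_add]
  rw [neg_one_pow_eq_pow_mod_two, neg_one_pow_eq_pow_mod_two (n := d + 1 + (d + 1 - I.card))]
  congr 1
  omega

lemma alt_sum_zero {d : ℕ} {R : V → AddCircle (1 : ℝ)} (hR : IsPolyDegLE R d)
    (y : Fin (d + 1) → V) (x : V) :
    ∑ I : Finset (Fin (d + 1)), ((-1 : ℤ) ^ I.card) • R (x + ∑ i ∈ I, y i) = 0 := by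
  have h1 : ∀ I : Finset (Fin (d + 1)),
      ((-1 : ℤ) ^ I.card) • R (x + ∑ i ∈ I, y i)
        = (-1 : ℤ) ^ (d + 1) • (((-1 : ℤ) ^ (d + 1 - I.card)) • R (x + ∑ i ∈ I, y i)) := by
    intro I
    rw [smul_smul, ← sign_swap]
  rw [Finset.sum_congr rfl fun I _ => h1 I, ← Finset.smul_sum, hR y x, smul_zero]

lemma gNum_phase {d : ℕ} (f : V → ℝ) {R : V → AddCircle (1 : ℝ)} (hR : IsPolyDegLE R d) :
    gNum (fun x => (f x : ℂ) * eC (R x)) (d + 1) = gNum (fun x => (f x : ℂ)) (d + 1) := by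
  unfold gNum
  refine Finset.sum_congr rfl fun x _ => Finset.sum_congr rfl fun y _ => ?_
  have hsplit : ∀ I : Finset (Fin (d + 1)),
      cnj I.card ((f (x + ∑ i ∈ I, y i) : ℂ) * eC (R (x + ∑ i ∈ I, y i)))
        = cnj I.card ((f (x + ∑ i ∈ I, y i) : ℂ)) * eC (((-1 : ℤ) ^ I.card) • R (x + ∑ i ∈ I, y i)) := by
    intro I
    rw [cnj_mul, cnj_eC]
  rw [Finset.prod_congr rfl fun I _ => hsplit I, Finset.prod_mul_distrib]
  rw [← eC_finset_sum, alt_sum_zero hR, eC_zero, mul_one]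

lemma gowersNorm_nonneg (f : V → ℝ) (k : ℕ) : 0 ≤ gowersNorm f k :=
  Real.rpow_nonneg (abs_nonneg _) _

/-- Key lemma: correlation with a degree-`d` polynomial phase is bounded by the
`U^{d+1}` Gowers norm. -/
lemma abs_sum_mul_eC_le {d : ℕ} (f : V → ℝ) {R : V → AddCircle (1 : ℝ)}
    (hR : IsPolyDegLE R d) :
    ‖∑ x : V, (f x : ℂ) * eC (R x)‖
      ≤ (Fintype.card V : ℝ) * gowersNorm f (d + 1) := by
  set N : ℝ := (Fintype.card V : ℝ) with hNdef
  have hN : 0 < N := cardV_pos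
  set a : ℝ := ‖∑ x : V, (f x : ℂ) * eC (R x)‖ / N with ha
  have ha0 : 0 ≤ a := by positivity
  have h1 : a ^ ((2 : ℕ) ^ (d + 1)) ≤ gowersAvg f (d + 1) := by
    have := abs_avg_pow_le_gAvgC (d + 1) (Nat.le_add_left 1 d)
      (fun x => (f x : ℂ) * eC (R x))
    rw [show gAvgC (fun x => (f x : ℂ) * eC (R x)) (d + 1)
        = ((gowersAvg f (d + 1) : ℝ) : ℂ) from by
      unfold gAvgC
      rw [gNum_phase f hR]
      rw [show gNum (fun x => (f x : ℂ)) (d+1) / (Fintype.card V : ℂ) ^ (d+1+1)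
        = gAvgC (fun x => (f x : ℂ)) (d+1) from rfl, gAvgC_ofReal]] at this
    rw [Complex.ofReal_re] at this
    exact this
  have h2 : a ^ ((2 : ℕ) ^ (d + 1)) ≤ |gowersAvg f (d + 1)| :=
    h1.trans (le_abs_self _)
  have hm : ((2 : ℝ) ^ (d + 1)) ≠ 0 := by positivity
  have key : a ≤ gowersNorm f (d + 1) := by
    have h3 : a = (a ^ ((2 : ℕ) ^ (d + 1))) ^ ((1 : ℝ) / 2 ^ (d + 1)) := by
      rw [← Real.rpow_natCast a ((2 : ℕ) ^ (d + 1))]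
      rw [← Real.rpow_mul ha0]
      rw [show (((2 : ℕ) ^ (d + 1) : ℕ) : ℝ) = (2 : ℝ) ^ (d + 1) by push_cast; ring]
      rw [mul_one_div, div_self hm, Real.rpow_one]
    rw [h3, gowersNorm]
    exact Real.rpow_le_rpow (by positivity) h2 (by positivity)
  calc ‖∑ x : V, (f x : ℂ) * eC (R x)‖ = N * a := by
        rw [ha, mul_div_cancel₀ _ (ne_of_gt hN)]
    _ ≤ N * gowersNorm f (d + 1) := by gcongr

end KeyGowers
section CondExp

open scoped Classical

variable {X α : Type*} [Fintype X] (B : X → α)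

lemma fiber_card_pos (x : X) :
    0 < ((Finset.univ.filter (fun y => B y = B x)).card : ℝ) := by
  have : x ∈ Finset.univ.filter (fun y => B y = B x) := by simp
  exact_mod_cast Finset.card_pos.2 ⟨x, this⟩

lemma condExp_congr_fiber (f : X → ℝ) {x x' : X} (h : B x = B x') :
    condExp B f x = condExp B f x' := by
  unfold condExp
  rw [h]

lemma condExp_add (g h : X → ℝ) (x : X) :
    condExp B (fun y => g y + h y) x = condExp B g x + condExp B h x := by
  unfold condExp
  rw [Finset.sum_add_distrib, add_div]

lemma condExp_of_fiber_const {g : X → ℝ} {x : X} (h : ∀ y, B y = B x → g y = g x) :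
    condExp B g x = g x := by
  unfold condExp
  rw [Finset.sum_congr rfl fun y hy => h y (Finset.mem_filter.1 hy).2]
  rw [Finset.sum_const, nsmul_eq_mul]
  exact mul_div_cancel_left₀ _ (ne_of_gt (fiber_card_pos B x))

lemma sum_condExp (f : X → ℝ) : ∑ x, condExp B f x = ∑ x, f x := by
  have hc : ∀ x y : X, B x = B y →
      (Finset.univ.filter (fun z => B z = B x)) = (Finset.univ.filter (fun z => B z = B y)) := by
    intro x y h
    exact Finset.filter_congr fun z _ => by rw [h]
  have step1 : ∀ x : X, condExp B f x
      = ∑ y, if B y = B x then f y / ((Finset.univ.filter (fun z => B z = B x)).card : ℝ)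
          else 0 := by
    intro x
    unfold condExp
    rw [Finset.sum_div, Finset.sum_filter]
  rw [Finset.sum_congr rfl fun x _ => step1 x, Finset.sum_comm]
  refine Finset.sum_congr rfl fun y _ => ?_
  have step2 : ∀ x : X, (if B y = B x then f y / ((Finset.univ.filter (fun z => B z = B x)).card : ℝ) else 0)
      = (if B x = B y then f y / ((Finset.univ.filter (fun z => B z = B y)).card : ℝ) else 0) := by
    intro x
    by_cases h : B y = B x
    · rw [if_pos h, if_pos h.symm, hc x y h.symm]
    · rw [if_neg h, if_neg (fun hh => h hh.symm)]
  rw [Finset.sum_congr rfl fun x _ => step2 x, ← Finset.sum_filter, Finset.sum_const,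
    nsmul_eq_mul, mul_comm, div_mul_cancel₀ _ (ne_of_gt (fiber_card_pos B y))]

lemma abs_condExp_le (f : X → ℝ) (x : X) :
    |condExp B f x| ≤ condExp B (fun y => |f y|) x := by
  unfold condExp
  rw [abs_div, abs_of_nonneg (le_of_lt (fiber_card_pos B x))]
  gcongr
  exact Finset.abs_sum_le_sum_abs _ _

lemma l1Avg_condExp_le [Nonempty X] (f : X → ℝ) : l1Avg (condExp B f) ≤ l1Avg f := by
  unfold l1Avg
  have hN : (0 : ℝ) < Fintype.card X := by exact_mod_cast Fintype.card_pos
  gcongr ?_ / _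
  calc ∑ x, |condExp B f x| ≤ ∑ x, condExp B (fun y => |f y|) x :=
        Finset.sum_le_sum fun x _ => abs_condExp_le B f x
    _ = ∑ x, |f x| := sum_condExp B _

lemma l1Avg_le_l2Avg [Nonempty X] (f : X → ℝ) : l1Avg f ≤ l2Avg f := by
  unfold l1Avg l2Avg
  have hN : (0 : ℝ) < Fintype.card X := by exact_mod_cast Fintype.card_pos
  rw [Real.le_sqrt (by positivity) (by positivity)]
  rw [div_pow]
  have hCS : (∑ x, |f x|) ^ 2 ≤ (Fintype.card X : ℝ) * ∑ x, f x ^ 2 := by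
    have h := sq_sum_le_card_mul_sum_sq (s := Finset.univ) (f := fun x => |f x|)
    rw [Finset.card_univ] at h
    calc (∑ x, |f x|) ^ 2 ≤ (Fintype.card X : ℝ) * ∑ x, |f x| ^ 2 := by exact_mod_cast h
      _ = (Fintype.card X : ℝ) * ∑ x, f x ^ 2 := by
          congr 1
          exact Finset.sum_congr rfl fun x _ => sq_abs (f x)
  calc (∑ x, |f x|) ^ 2 / ((Fintype.card X : ℝ)) ^ 2
      ≤ ((Fintype.card X : ℝ) * ∑ x, f x ^ 2) / ((Fintype.card X : ℝ)) ^ 2 := by gcongr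
    _ = (∑ x, f x ^ 2) / (Fintype.card X : ℝ) := by
        field_simp

lemma sum_abs_condExp_eq {X α : Type*} [Fintype X] [DecidableEq α] (B : X → α) (f : X → ℝ) :
    ∑ x : X, |condExp B f x|
      = ∑ b ∈ Finset.univ.image B, |∑ y ∈ Finset.univ.filter (fun y => B y = b), f y| := by
  rw [← Finset.sum_fiberwise_of_maps_to
    (fun x (_ : x ∈ Finset.univ) => Finset.mem_image_of_mem B (Finset.mem_univ x))
    (fun x => |condExp B f x|)]
  refine Finset.sum_congr rfl fun b hb => ?_
  have hcpos : (0 : ℝ) < ((Finset.univ.filter (fun y => B y = b)).card : ℝ) := by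
    rcases Finset.mem_image.1 hb with ⟨x₀, _, hx₀⟩
    have hx : x₀ ∈ Finset.univ.filter (fun y => B y = b) :=
      Finset.mem_filter.2 ⟨Finset.mem_univ _, hx₀⟩
    exact_mod_cast Finset.card_pos.2 ⟨x₀, hx⟩
  have hterm : ∀ x ∈ Finset.univ.filter (fun x => B x = b),
      |condExp B f x| = |∑ y ∈ Finset.univ.filter (fun y => B y = b), f y| /
        ((Finset.univ.filter (fun y => B y = b)).card : ℝ) := by
    intro x hx
    have hBx : B x = b := (Finset.mem_filter.1 hx).2
    unfold condExp
    rw [hBx, Finset.filter_congr_decidable, abs_div, Nat.abs_cast]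
  rw [Finset.sum_congr rfl hterm, Finset.sum_const, nsmul_eq_mul, mul_comm,
    div_mul_cancel₀ _ (ne_of_gt hcpos)]

end CondExp
section StepC

open scoped Classical

variable {p n : ℕ} [Fact p.Prime]

lemma hV_torsion (v : Fin n → ZMod p) : p • v = 0 := by
  funext i
  simp only [Pi.smul_apply, Pi.zero_apply, nsmul_eq_mul]
  rw [ZMod.natCast_self, zero_mul]

lemma stepC {d C' : ℕ}
    (Q : Fin C' → (Fin n → ZMod p) → AddCircle (1 : ℝ))
    (hdegQ : ∀ i, IsPolyDegLE (Q i) d) (f₃ : (Fin n → ZMod p) → ℝ) :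
    l1Avg (condExp (fun x => fun i => Q i x) f₃)
      ≤ (p : ℝ) ^ (d * C') * gowersNorm f₃ (d + 1) := by
  set B : (Fin n → ZMod p) → (Fin C' → AddCircle (1 : ℝ)) := fun x => fun i => Q i x with hBdef
  set M : ℕ := p ^ d with hMdef
  have hp : 0 < p := (Fact.out : p.Prime).pos
  have hMpos : 0 < M := pow_pos hp d
  have hMne : ((M : ℂ)) ≠ 0 := Nat.cast_ne_zero.2 hMpos.ne'
  set N : ℝ := (Fintype.card (Fin n → ZMod p) : ℝ) with hNdef
  have hN : 0 < N := cardV_pos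
  set γ : ℝ := gowersNorm f₃ (d + 1) with hγdef
  have hγ0 : 0 ≤ γ := gowersNorm_nonneg _ _
  have htor : ∀ (i : Fin C') (x : Fin n → ZMod p), M • (Q i x - Q i 0) = 0 :=
    fun i x => torsion_of_poly hV_torsion (Q i) (hdegQ i) x
  have hdiff : ∀ (i : Fin C') (x y : Fin n → ZMod p), M • (Q i y - Q i x) = 0 := by
    intro i x y
    have : Q i y - Q i x = (Q i y - Q i 0) - (Q i x - Q i 0) := by abel
    rw [this, smul_sub, htor, htor, sub_zero]
  -- the sum over an atom
  set S : (Fin C' → AddCircle (1 : ℝ)) → ℝ :=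
    fun b => ∑ y ∈ Finset.univ.filter (fun y => B y = b), f₃ y with hSdef
  -- Step 1: group the L¹ norm by atoms
  have hgroup : ∑ x : Fin n → ZMod p, |condExp B f₃ x| = ∑ b ∈ Finset.univ.image B, |S b| :=
    sum_abs_condExp_eq B f₃
  -- Step 2: bound |S b| for each atom
  have hSbound : ∀ b ∈ Finset.univ.image B, |S b| ≤ N * γ := by
    intro b hb
    rcases Finset.mem_image.1 hb with ⟨x₀, _, hx₀⟩
    -- Fourier expansion of the indicator of the atom
    have hind : ∀ y : Fin n → ZMod p, (if B y = b then (1 : ℂ) else 0)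
        = (1 / (M : ℂ)) ^ C' *
          ∑ κ ∈ Fintype.piFinset (fun _ : Fin C' => Finset.range M),
            (eC (-(∑ i, κ i • b i)) * eC (∑ i, κ i • Q i y)) := by
      intro y
      have hs : ∀ i : Fin C', M • (Q i y - b i) = 0 := by
        intro i
        rw [← hx₀]
        exact hdiff i x₀ y
      have h1 : (if B y = b then (1 : ℂ) else 0)
          = ∏ i : Fin C', (if Q i y = b i then (1 : ℂ) else 0) := by
        rw [Fintype.prod_boole]
        congr 1
        · simp only [eq_iff_iff]
          constructor
          · intro h i; rw [← h]
          · intro h; funext i; exact h i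
      have h2 : ∀ i : Fin C', (if Q i y = b i then (1 : ℂ) else 0)
          = (1 / (M : ℂ)) * ∑ k ∈ Finset.range M, eC (Q i y - b i) ^ k := by
        intro i
        rw [eC_geom_sum hMpos (hs i)]
        by_cases h : Q i y = b i
        · rw [if_pos h, if_pos (sub_eq_zero.2 h)]
          field_simp
        · rw [if_neg h, if_neg (fun hh => h (sub_eq_zero.1 hh)), mul_zero]
      rw [h1, Finset.prod_congr rfl fun i _ => h2 i, Finset.prod_mul_distrib,
        Finset.prod_const, Finset.card_univ, Fintype.card_fin,
        Finset.prod_univ_sum]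
      congr 1
      refine Finset.sum_congr rfl fun κ _ => ?_
      calc ∏ i : Fin C', eC (Q i y - b i) ^ κ i
          = ∏ i : Fin C', eC (κ i • (Q i y - b i)) :=
            Finset.prod_congr rfl fun i _ => (eC_nsmul (κ i) _).symm
        _ = eC (∑ i, κ i • (Q i y - b i)) := (eC_finset_sum _ _).symm
        _ = eC (-(∑ i, κ i • b i) + ∑ i, κ i • Q i y) := by
            congr 1
            rw [Finset.sum_congr rfl fun i _ => smul_sub (κ i) (Q i y) (b i),
              Finset.sum_sub_distrib]
            abel
        _ = _ := eC_add _ _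
    -- express S b in ℂ
    have hSc : ((S b : ℝ) : ℂ)
        = (1 / (M : ℂ)) ^ C' *
          ∑ κ ∈ Fintype.piFinset (fun _ : Fin C' => Finset.range M),
            eC (-(∑ i, κ i • b i)) * ∑ y : Fin n → ZMod p, (f₃ y : ℂ) * eC (∑ i, κ i • Q i y) := by
      calc ((S b : ℝ) : ℂ) = ∑ y : Fin n → ZMod p, (f₃ y : ℂ) * (if B y = b then 1 else 0) := by
            rw [hSdef]
            push_cast
            rw [Finset.sum_filter]
            refine Finset.sum_congr rfl fun y _ => ?_
            split <;> simp
        _ = ∑ y : Fin n → ZMod p, ∑ κ ∈ Fintype.piFinset (fun _ : Fin C' => Finset.range M),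
              (1 / (M : ℂ)) ^ C' *
                (eC (-(∑ i, κ i • b i)) * ((f₃ y : ℂ) * eC (∑ i, κ i • Q i y))) := by
            refine Finset.sum_congr rfl fun y _ => ?_
            rw [hind y, Finset.mul_sum, Finset.mul_sum]
            exact Finset.sum_congr rfl fun κ _ => by ring
        _ = ∑ κ ∈ Fintype.piFinset (fun _ : Fin C' => Finset.range M),
              ∑ y : Fin n → ZMod p, (1 / (M : ℂ)) ^ C' *
                (eC (-(∑ i, κ i • b i)) * ((f₃ y : ℂ) * eC (∑ i, κ i • Q i y))) :=
            Finset.sum_comm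
        _ = _ := by
            rw [Finset.mul_sum]
            refine Finset.sum_congr rfl fun κ _ => ?_
            rw [← Finset.mul_sum, ← Finset.mul_sum]
    -- bound each character sum
    have hW : ∀ κ : Fin C' → ℕ,
        ‖∑ y : Fin n → ZMod p, (f₃ y : ℂ) * eC (∑ i, κ i • Q i y)‖ ≤ N * γ := by
      intro κ
      exact abs_sum_mul_eC_le f₃ (isPolyDegLE_combo Q hdegQ κ)
    have hcardpi : (Fintype.piFinset (fun _ : Fin C' => Finset.range M)).card = M ^ C' := by
      rw [Fintype.card_piFinset]
      simp
    have habs : |S b| ≤ (1 / (M : ℝ)) ^ C' * ((M : ℝ) ^ C' * (N * γ)) := by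
      have h0 : |S b| = ‖((S b : ℝ) : ℂ)‖ := by
        rw [Complex.norm_real, Real.norm_eq_abs]
      rw [h0, hSc, norm_mul]
      have hconst : ‖(1 / (M : ℂ)) ^ C'‖ = (1 / (M : ℝ)) ^ C' := by
        rw [norm_pow, norm_div, norm_one, Complex.norm_natCast]
      rw [hconst]
      gcongr
      calc ‖∑ κ ∈ Fintype.piFinset (fun _ : Fin C' => Finset.range M),
              eC (-(∑ i, κ i • b i)) * ∑ y : Fin n → ZMod p, (f₃ y : ℂ) * eC (∑ i, κ i • Q i y)‖
          ≤ ∑ κ ∈ Fintype.piFinset (fun _ : Fin C' => Finset.range M),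
              ‖eC (-(∑ i, κ i • b i)) * ∑ y : Fin n → ZMod p, (f₃ y : ℂ) * eC (∑ i, κ i • Q i y)‖ :=
            norm_sum_le _ _
        _ ≤ ∑ κ ∈ Fintype.piFinset (fun _ : Fin C' => Finset.range M), N * γ := by
            refine Finset.sum_le_sum fun κ _ => ?_
            rw [norm_mul, eC_abs, one_mul]
            exact hW κ
        _ = (M : ℝ) ^ C' * (N * γ) := by
            rw [Finset.sum_const, hcardpi, nsmul_eq_mul]
            push_cast
            ring
    calc |S b| ≤ (1 / (M : ℝ)) ^ C' * ((M : ℝ) ^ C' * (N * γ)) := habs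
      _ = N * γ := by
          have hMR : ((M : ℝ)) ≠ 0 := Nat.cast_ne_zero.2 hMpos.ne'
          rw [← mul_assoc, one_div, inv_pow, inv_mul_cancel₀ (pow_ne_zero _ hMR), one_mul]
  -- Step 3: count the atoms
  have hcount : ((Finset.univ.image B).card : ℝ) ≤ (M : ℝ) ^ C' := by
    have hinj : Set.InjOn (fun b : Fin C' → AddCircle (1 : ℝ) => fun i => eC (b i - Q i 0))
        (Finset.univ.image B) := by
      intro b hb b' hb' h
      funext i
      have := congrFun h i
      have h2 := eC_inj this
      rwa [sub_left_inj] at h2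
    have hmaps : ∀ b ∈ Finset.univ.image B,
        (fun i => eC (b i - Q i 0)) ∈
          Fintype.piFinset (fun _ : Fin C' => (Polynomial.nthRoots M (1 : ℂ)).toFinset) := by
      intro b hb
      rcases Finset.mem_image.1 hb with ⟨x₀, _, hx₀⟩
      rw [Fintype.mem_piFinset]
      intro i
      rw [Multiset.mem_toFinset, Polynomial.mem_nthRoots hMpos]
      rw [← eC_nsmul]
      rw [← hx₀]
      show eC (M • ((fun j => Q j x₀) i - Q i 0)) = 1
      rw [htor i x₀, eC_zero]
    have h1 := Finset.card_le_card_of_injOn _ hmaps hinj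
    have h2 : (Fintype.piFinset (fun _ : Fin C' => (Polynomial.nthRoots M (1 : ℂ)).toFinset)).card
        ≤ M ^ C' := by
      rw [Fintype.card_piFinset]
      calc ∏ _i : Fin C', (Polynomial.nthRoots M (1 : ℂ)).toFinset.card
          ≤ ∏ _i : Fin C', M := by
            refine Finset.prod_le_prod' fun i _ => ?_
            exact (Multiset.toFinset_card_le _).trans (Polynomial.card_nthRoots M (1 : ℂ))
        _ = M ^ C' := by
            rw [Finset.prod_const, Finset.card_univ, Fintype.card_fin]
    exact_mod_cast h1.trans h2
  -- final assembly
  have hfinal : l1Avg (condExp B f₃) ≤ (M : ℝ) ^ C' * γ := by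
    unfold l1Avg
    rw [hgroup]
    rw [div_le_iff₀ hN]
    calc ∑ b ∈ Finset.univ.image B, |S b|
        ≤ ∑ b ∈ Finset.univ.image B, N * γ := Finset.sum_le_sum hSbound
      _ = ((Finset.univ.image B).card : ℝ) * (N * γ) := by rw [Finset.sum_const, nsmul_eq_mul]
      _ ≤ (M : ℝ) ^ C' * (N * γ) := by gcongr
      _ = (M : ℝ) ^ C' * γ * N := by ring
  calc l1Avg (condExp B f₃) ≤ (M : ℝ) ^ C' * γ := hfinal
    _ = (p : ℝ) ^ (d * C') * γ := by
        rw [hMdef]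
        push_cast
        rw [← pow_mul]

end StepC
/-- Let `B` be a polynomial factor of degree `d`, complexity `C`, on
`F_p^n`, let `f : F_p^n → {0,1}` decompose as `f = E[f|B] + f₂ + f₃` with `f₂, f₃`
`[-1,1]`-valued, and let `B'` be a polynomial factor of degree `d`, complexity `C'`,
whose partition refines that of `B`. Then
`‖E[f|B] − E[f|B']‖₁ ≤ ‖f₂‖₂ + p^{dC'} ‖f₃‖_{U^{d+1}}`. -/
theorem condExp_refinement_bound {p n : ℕ} [Fact p.Prime] (d C C' : ℕ)
    (P : Fin C → (Fin n → ZMod p) → AddCircle (1 : ℝ))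
    (Q : Fin C' → (Fin n → ZMod p) → AddCircle (1 : ℝ))
    (hdegP : ∀ i, IsPolyDegLE (P i) d)
    (hdegQ : ∀ i, IsPolyDegLE (Q i) d)
    (hrefine : ∀ x y : Fin n → ZMod p,
      (fun i => Q i x) = (fun i => Q i y) → (fun i => P i x) = (fun i => P i y))
    (f f₂ f₃ : (Fin n → ZMod p) → ℝ)
    (hf : ∀ x, f x ∈ ({0, 1} : Set ℝ))
    (hf₂ : ∀ x, f₂ x ∈ Set.Icc (-1 : ℝ) 1)
    (hf₃ : ∀ x, f₃ x ∈ Set.Icc (-1 : ℝ) 1)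
    (hdecomp : ∀ x, f x = condExp (fun x => fun i => P i x) f x + f₂ x + f₃ x) :
    l1Avg (fun x => condExp (fun x => fun i => P i x) f x -
        condExp (fun x => fun i => Q i x) f x) ≤
      l2Avg f₂ + (p : ℝ) ^ (d * C') * gowersNorm f₃ (d + 1) := by
  have hNon : Nonempty (Fin n → ZMod p) := ⟨0⟩
  set BP : (Fin n → ZMod p) → (Fin C → AddCircle (1 : ℝ)) := fun x => fun i => P i x with hBP
  set BQ : (Fin n → ZMod p) → (Fin C' → AddCircle (1 : ℝ)) := fun x => fun i => Q i x with hBQ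
  have hfeq : f = fun y => (condExp BP f y + f₂ y) + f₃ y := by
    funext y
    exact hdecomp y
  have h1 : ∀ x, condExp BQ f x
      = condExp BP f x + condExp BQ f₂ x + condExp BQ f₃ x := by
    intro x
    conv_lhs => rw [hfeq]
    rw [condExp_add BQ (fun y => condExp BP f y + f₂ y) f₃ x,
      condExp_add BQ (fun y => condExp BP f y) f₂ x]
    have hconst : condExp BQ (fun y => condExp BP f y) x = condExp BP f x := by
      refine condExp_of_fiber_const BQ ?_
      intro y hy
      have hPQ : BP y = BP x := by
        have := hrefine y x ?_
        · exact this
        · exact hy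
      exact condExp_congr_fiber BP f hPQ
    rw [hconst]
  have hpt : ∀ x, |condExp BP f x - condExp BQ f x|
      ≤ |condExp BQ f₂ x| + |condExp BQ f₃ x| := by
    intro x
    have : condExp BP f x - condExp BQ f x = -(condExp BQ f₂ x + condExp BQ f₃ x) := by
      rw [h1 x]; ring
    rw [this, abs_neg]
    exact abs_add_le _ _
  have hsplit : l1Avg (fun x => condExp BP f x - condExp BQ f x)
      ≤ l1Avg (condExp BQ f₂) + l1Avg (condExp BQ f₃) := by
    unfold l1Avg
    rw [← add_div]
    have hN : (0 : ℝ) < (Fintype.card (Fin n → ZMod p) : ℝ) := by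
      exact_mod_cast Fintype.card_pos
    gcongr ?_ / _
    rw [← Finset.sum_add_distrib]
    exact Finset.sum_le_sum fun x _ => hpt x
  have hf₂bound : l1Avg (condExp BQ f₂) ≤ l2Avg f₂ :=
    (l1Avg_condExp_le BQ f₂).trans (l1Avg_le_l2Avg f₂)
  have hf₃bound : l1Avg (condExp BQ f₃) ≤ (p : ℝ) ^ (d * C') * gowersNorm f₃ (d + 1) :=
    stepC Q hdegQ f₃
  exact hsplit.trans (add_le_add hf₂bound hf₃bound)
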